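/- arXiv:0910.1848 — 2 statements merged into one kernel-verified Lean document; each statement's English description precedes it below -/
import Mathlib

section
/- For every symmetric 2×2 complex matrix τ whose imaginary part is positive definite, the theta constants satisfy the Igusa quartic relation u₂(τ)² − 4·u₄(τ) = 0, where u_k(τ) = Σ_{x,y ∈ {0,1}²} θ_{x,y}(τ)^{4k}; explicitly, ( Σ_{x,y∈{0,1}²} θ_{x,y}(τ)⁸ )² = 4 · Σ_{x,y∈{0,1}²} θ_{x,y}(τ)¹⁶. -/
open scoped Real
open Complex

/-- The theta constant `θ_{x,y}(τ)` for `τ` in the Siegel upper half plane. -/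
noncomputable def thetaConstant (τ : Matrix (Fin 2) (Fin 2) ℂ) (x y : Fin 2 → ℤ) : ℂ :=
  ∑' n : Fin 2 → ℤ,
    Complex.exp ((π : ℂ) * Complex.I *
      ((∑ i, ∑ j, ((n i : ℂ) + (x i : ℂ) / 2) * τ i j * ((n j : ℂ) + (x j : ℂ) / 2))
        + ∑ i, ((n i : ℂ) + (x i : ℂ) / 2) * (y i : ℂ)))

noncomputable section ThetaAux

/-- quadratic form -/
def Qf (τ : Matrix (Fin 2) (Fin 2) ℂ) (v : Fin 2 → ℂ) : ℂ :=
  ∑ i, ∑ j, v i * τ i j * v j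

/-- second order theta constant -/
def Th (τ : Matrix (Fin 2) (Fin 2) ℂ) (σ : Fin 2 → Fin 2) : ℂ :=
  ∑' k : Fin 2 → ℤ,
    Complex.exp (2 * (π : ℂ) * Complex.I *
      Qf τ (fun i => (k i : ℂ) + ((σ i : ℤ) : ℂ) / 2))

lemma posdef_bound (Y : Matrix (Fin 2) (Fin 2) ℝ) (hY : Y.PosDef) :
    ∃ ε > 0, ∀ v : Fin 2 → ℝ,
      ε * (v 0 ^ 2 + v 1 ^ 2) ≤ ∑ i, ∑ j, v i * Y i j * v j := by
  have hsym : Y 1 0 = Y 0 1 := by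
    have := congrFun (congrFun hY.1 0) 1
    simpa [Matrix.conjTranspose_apply] using this
  set A := Y 0 0 with hA'
  set B := Y 0 1 with hB'
  set C := Y 1 1 with hC'
  have hquad : ∀ v : Fin 2 → ℝ, v ≠ 0 → 0 < A * v 0 ^ 2 + 2 * B * (v 0 * v 1) + C * v 1 ^ 2 := by
    intro v hv
    have := hY.dotProduct_mulVec_pos hv
    simp only [dotProduct, Matrix.mulVec, Fin.sum_univ_two, star_trivial] at this
    rw [hsym] at this
    nlinarith [this]
  have hApos : 0 < A := by
    have := hquad ![1, 0] (by intro h; exact one_ne_zero (congrFun h 0))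
    simpa using this
  have hCpos : 0 < C := by
    have := hquad ![0, 1] (by intro h; exact one_ne_zero (congrFun h 1))
    simpa using this
  have hdet : 0 < A * C - B ^ 2 := by
    have h := hquad ![B, -A] (by
      intro h
      have := congrFun h 1
      simp at this
      exact absurd this (by positivity))
    simp only [Matrix.cons_val_zero, Matrix.cons_val_one, Matrix.head_cons] at h
    nlinarith [h, hApos]
  refine ⟨(A * C - B ^ 2) / (A + C), by positivity, fun v => ?_⟩
  simp only [Fin.sum_univ_two]
  rw [hsym, div_mul_eq_mul_div, div_le_iff₀ (by positivity)]
  nlinarith [sq_nonneg (A * v 0 + B * v 1), sq_nonneg (B * v 0 + C * v 1)]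

/-- 1-dimensional Gaussian summability -/
lemma summable_gauss (κ : ℝ) (hκ : 0 < κ) : Summable fun m : ℤ => Real.exp (-κ * (m : ℝ) ^ 2) := by
  have h := summable_pow_mul_jacobiTheta₂_term_bound 0 (T := κ / π) (by positivity) 0
  refine h.congr fun m => ?_
  have hπ : (π : ℝ) ≠ 0 := Real.pi_ne_zero
  rw [pow_zero, one_mul]
  congr 1
  field_simp
  ring

/-- imaginary part of the quadratic form on real vectors -/
lemma Qf_im (τ : Matrix (Fin 2) (Fin 2) ℂ) (v : Fin 2 → ℝ) :
    (Qf τ (fun i => (v i : ℂ))).im = ∑ i, ∑ j, v i * (τ.map Complex.im) i j * v j := by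
  simp only [Qf, Fin.sum_univ_two, Matrix.map_apply, Complex.add_im, Complex.mul_im,
    Complex.mul_re, Complex.ofReal_re, Complex.ofReal_im]
  ring

/-- master summability lemma -/
lemma summable_norm_gen (τ : Matrix (Fin 2) (Fin 2) ℂ)
    (hpos : (τ.map Complex.im).PosDef) (t : ℝ) (ht : 0 < t) (c L : Fin 2 → ℝ) :
    Summable fun n : Fin 2 → ℤ =>
      ‖Complex.exp ((t : ℂ) * Complex.I *
        (Qf τ (fun i => (n i : ℂ) + (c i : ℂ)) + ∑ i, ((n i : ℂ) + (c i : ℂ)) * (L i : ℂ)))‖ := by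
  obtain ⟨ε, hε, hbd⟩ := posdef_bound _ hpos
  set κ := t * ε / 2 with hκ'
  have hκ : 0 < κ := by positivity
  set K := t * ε * (c 0 ^ 2 + c 1 ^ 2) with hK'
  -- the comparison series
  have hg : Summable fun n : Fin 2 → ℤ =>
      Real.exp K * (Real.exp (-κ * (n 0 : ℝ) ^ 2) * Real.exp (-κ * (n 1 : ℝ) ^ 2)) := by
    refine Summable.mul_left _ ?_
    have h2 : Summable fun p : ℤ × ℤ =>
        Real.exp (-κ * (p.1 : ℝ) ^ 2) * Real.exp (-κ * (p.2 : ℝ) ^ 2) :=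
      (summable_gauss κ hκ).mul_of_nonneg (summable_gauss κ hκ)
        (fun m => (Real.exp_pos _).le) (fun m => (Real.exp_pos _).le)
    have h3 := (Equiv.summable_iff (piFinTwoEquiv fun _ => ℤ)).mpr h2
    exact h3.congr fun n => by simp [Function.comp, piFinTwoEquiv]
  refine hg.of_nonneg_of_le (fun n => norm_nonneg _) fun n => ?_
  -- compute the norm
  have hre : ((t : ℂ) * Complex.I *
      (Qf τ (fun i => (n i : ℂ) + (c i : ℂ)) + ∑ i, ((n i : ℂ) + (c i : ℂ)) * (L i : ℂ))).re
      = -t * (∑ i, ∑ j, ((n i : ℝ) + c i) * (τ.map Complex.im) i j * ((n j : ℝ) + c j)) := by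
    have harg : (fun i => (n i : ℂ) + (c i : ℂ)) = fun i => (((n i : ℝ) + c i : ℝ) : ℂ) := by
      funext i; push_cast; ring
    have hlin : (∑ i, ((n i : ℂ) + (c i : ℂ)) * (L i : ℂ))
        = ((∑ i, ((n i : ℝ) + c i) * L i : ℝ) : ℂ) := by
      push_cast; rfl
    rw [harg, hlin]
    have hQ := Qf_im τ (fun i => (n i : ℝ) + c i)
    simp only [Complex.mul_re, Complex.mul_im, Complex.add_im, Complex.add_re,
      Complex.ofReal_im, Complex.ofReal_re, Complex.I_re, Complex.I_im, hQ]
    ring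
  rw [Complex.norm_exp, hre]
  rw [show Real.exp K * (Real.exp (-κ * (n 0 : ℝ) ^ 2) * Real.exp (-κ * (n 1 : ℝ) ^ 2))
      = Real.exp (K + (-κ * (n 0 : ℝ) ^ 2 + -κ * (n 1 : ℝ) ^ 2)) by
    rw [Real.exp_add, Real.exp_add]]
  apply Real.exp_le_exp.mpr
  have h := hbd (fun i => (n i : ℝ) + c i)
  have h' := mul_le_mul_of_nonneg_left h ht.le
  nlinarith [h', mul_nonneg (mul_pos ht hε).le (sq_nonneg ((n 0 : ℝ) + 2 * c 0)),
    mul_nonneg (mul_pos ht hε).le (sq_nonneg ((n 1 : ℝ) + 2 * c 1))]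

lemma fin2_cases (a : Fin 2) : a = 0 ∨ a = 1 := by fin_cases a <;> simp

lemma fin2_cast_bounds (a : Fin 2) : (0:ℤ) ≤ (a : ℤ) ∧ (a : ℤ) < 2 := by
  fin_cases a <;> norm_num

/-- the reindexing bijection `(σ, k, l) ↦ (k+l+σ, k-l-x)` -/
def Ee (x : Fin 2 → Fin 2) :
    ((Fin 2 → Fin 2) × ((Fin 2 → ℤ) × (Fin 2 → ℤ))) ≃ ((Fin 2 → ℤ) × (Fin 2 → ℤ)) where
  toFun w := (fun i => w.2.1 i + w.2.2 i + ((w.1 i : ℤ)),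
              fun i => w.2.1 i - w.2.2 i - ((x i : ℤ)))
  invFun z := (fun i => if (z.1 i + z.2 i + (x i : ℤ)) % 2 = 0 then 0 else 1,
    (fun i => (z.1 i + z.2 i + (x i : ℤ)) / 2,
     fun i => (z.1 i - z.2 i - (x i : ℤ)) / 2))
  left_inv := by
    rintro ⟨σ, k, l⟩
    refine Prod.ext ?_ (Prod.ext ?_ ?_) <;> funext i <;> dsimp only <;>
      obtain ⟨hx0, hx1⟩ := fin2_cast_bounds (x i)
    · rcases fin2_cases (σ i) with h | h <;> simp only [h]
      · rw [if_pos (by norm_num; omega)]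
      · rw [if_neg (by norm_num; omega)]
    · obtain ⟨hs0, hs1⟩ := fin2_cast_bounds (σ i); omega
    · obtain ⟨hs0, hs1⟩ := fin2_cast_bounds (σ i); omega
  right_inv := by
    rintro ⟨m, n⟩
    refine Prod.ext ?_ ?_ <;> funext i <;> obtain ⟨hx0, hx1⟩ := fin2_cast_bounds (x i) <;>
      dsimp only
    · rw [apply_ite (fun a : Fin 2 => (a : ℤ))]
      norm_num
      split <;> omega
    · omega

lemma fin2_add_cast (a b : Fin 2) :
    (((a + b : Fin 2) : ℤ)) = (a : ℤ) + (b : ℤ) - 2 * ((a : ℤ) * (b : ℤ)) := by fin_cases a <;> fin_cases b <;> decide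

/-- shifting: the sum over the coset `2ℤ² + σ + x` equals `Th τ (σ + x)` -/
lemma B_eq_Th (τ : Matrix (Fin 2) (Fin 2) ℂ) (σ x : Fin 2 → Fin 2) :
    (∑' l : Fin 2 → ℤ,
      Complex.exp (2 * (π : ℂ) * Complex.I *
        Qf τ (fun i => (l i : ℂ) + ((σ i : ℤ) : ℂ) / 2 + ((x i : ℤ) : ℂ) / 2)))
    = Th τ (σ + x) := by
  rw [Th, ← Equiv.tsum_eq (Equiv.addRight (fun i => (σ i : ℤ) * (x i : ℤ)))
    (fun k : Fin 2 → ℤ => Complex.exp (2 * (π : ℂ) * Complex.I *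
      Qf τ (fun i => (k i : ℂ) + (((σ + x) i : ℤ) : ℂ) / 2)))]
  refine tsum_congr fun l => congrArg Complex.exp
    (congrArg (2 * (π : ℂ) * Complex.I * ·) (congrArg (Qf τ) ?_))
  funext i
  have h := fin2_add_cast (σ i) (x i)
  simp only [Equiv.coe_addRight, Pi.add_apply, h]
  push_cast
  ring

lemma theta_sq (τ : Matrix (Fin 2) (Fin 2) ℂ) (hsymm : τ.IsSymm)
    (hpos : (τ.map Complex.im).PosDef) (x y : Fin 2 → Fin 2) :
    thetaConstant τ (fun i => (x i : ℤ)) (fun i => (y i : ℤ)) ^ 2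
      = ∑ σ : Fin 2 → Fin 2,
          (-1 : ℂ) ^ (∑ i, (σ i : ℤ) * (y i : ℤ)) * (Th τ σ * Th τ (σ + x)) := by
  classical
  set F : (Fin 2 → ℤ) → ℂ := fun n =>
    Complex.exp ((π : ℂ) * Complex.I *
      (Qf τ (fun i => (n i : ℂ) + (((x i : ℤ) : ℂ)) / 2)
        + ∑ i, ((n i : ℂ) + (((x i : ℤ) : ℂ)) / 2) * ((y i : ℤ) : ℂ))) with hF
  have hθ : thetaConstant τ (fun i => (x i : ℤ)) (fun i => (y i : ℤ)) = ∑' n, F n := rfl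
  -- summability of F (in norm)
  have hFnorm : Summable fun n : Fin 2 → ℤ => ‖F n‖ := by
    refine (summable_norm_gen τ hpos π Real.pi_pos (fun i => ((x i : ℤ) : ℝ) / 2)
      (fun i => ((y i : ℤ) : ℝ))).congr fun n => ?_
    push_cast
    rfl
  -- summability of the `Th`-type series
  have hTh : ∀ c : Fin 2 → ℝ, Summable fun k : Fin 2 → ℤ =>
      ‖Complex.exp (2 * (π : ℂ) * Complex.I * Qf τ (fun i => (k i : ℂ) + ((c i : ℝ) : ℂ)))‖ := by
    intro c
    refine (summable_norm_gen τ hpos (2 * π) (by positivity) c 0).congr fun k => ?_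
    simp only [Pi.zero_apply, Complex.ofReal_zero, mul_zero, Finset.sum_const_zero, add_zero]
    push_cast
    rfl
  have hA : ∀ σ : Fin 2 → Fin 2, Summable fun k : Fin 2 → ℤ =>
      ‖Complex.exp (2 * (π : ℂ) * Complex.I *
        Qf τ (fun i => (k i : ℂ) + ((σ i : ℤ) : ℂ) / 2))‖ := by
    intro σ
    refine (hTh (fun i => ((σ i : ℤ) : ℝ) / 2)).congr fun k => ?_
    push_cast
    rfl
  have hB : ∀ σ : Fin 2 → Fin 2, Summable fun l : Fin 2 → ℤ =>
      ‖Complex.exp (2 * (π : ℂ) * Complex.I *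
        Qf τ (fun i => (l i : ℂ) + ((σ i : ℤ) : ℂ) / 2 + ((x i : ℤ) : ℂ) / 2))‖ := by
    intro σ
    refine (hTh (fun i => ((σ i : ℤ) : ℝ) / 2 + ((x i : ℤ) : ℝ) / 2)).congr fun l => ?_
    push_cast
    simp only [add_assoc]
  have hsum2 : Summable fun z : (Fin 2 → ℤ) × (Fin 2 → ℤ) => F z.1 * F z.2 :=
    (hFnorm.mul_norm hFnorm).of_norm
  have hsum3' : Summable ((fun z : (Fin 2 → ℤ) × (Fin 2 → ℤ) => F z.1 * F z.2) ∘ (Ee x)) :=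
    (Equiv.summable_iff (Ee x)).mpr hsum2
  have hsum3 : Summable fun w : (Fin 2 → Fin 2) × ((Fin 2 → ℤ) × (Fin 2 → ℤ)) =>
      F ((Ee x) w).1 * F ((Ee x) w).2 := hsum3'.congr fun w => rfl
  -- the pointwise identity
  have hpt : ∀ (σ : Fin 2 → Fin 2) (kl : (Fin 2 → ℤ) × (Fin 2 → ℤ)),
      F ((Ee x) (σ, kl)).1 * F ((Ee x) (σ, kl)).2
        = (-1 : ℂ) ^ (∑ i, (σ i : ℤ) * (y i : ℤ)) *
          (Complex.exp (2 * (π : ℂ) * Complex.I *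
              Qf τ (fun i => (kl.1 i : ℂ) + ((σ i : ℤ) : ℂ) / 2)) *
            Complex.exp (2 * (π : ℂ) * Complex.I *
              Qf τ (fun i => (kl.2 i : ℂ) + ((σ i : ℤ) : ℂ) / 2 + ((x i : ℤ) : ℂ) / 2))) := by
    rintro σ ⟨k, l⟩
    simp only [hF, Ee, Equiv.coe_fn_mk]
    rw [← Complex.exp_add, ← Complex.exp_add]
    rw [show ((-1 : ℂ) ^ (∑ i, (σ i : ℤ) * (y i : ℤ)))
        = Complex.exp (((∑ i, (σ i : ℤ) * (y i : ℤ) : ℤ) : ℂ) * ((π : ℂ) * Complex.I)) by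
      rw [Complex.exp_int_mul, Complex.exp_pi_mul_I]]
    rw [← Complex.exp_add]
    refine Complex.exp_eq_exp_iff_exists_int.mpr ⟨∑ i, k i * (y i : ℤ), ?_⟩
    have h10 : τ 1 0 = τ 0 1 := hsymm.apply 0 1
    simp only [Qf, Fin.sum_univ_two, h10]
    push_cast
    ring
  -- assemble
  rw [hθ, sq, tsum_mul_tsum_of_summable_norm hFnorm hFnorm,
    ← Equiv.tsum_eq (Ee x) (fun z => F z.1 * F z.2)]
  rw [show (fun w => (fun z : (Fin 2 → ℤ) × (Fin 2 → ℤ) => F z.1 * F z.2) ((Ee x) w))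
      = fun w : (Fin 2 → Fin 2) × ((Fin 2 → ℤ) × (Fin 2 → ℤ)) =>
        F ((Ee x) w).1 * F ((Ee x) w).2 from rfl]
  rw [hsum3.tsum_prod, tsum_fintype]
  refine Finset.sum_congr rfl fun σ _ => ?_
  calc (∑' kl : (Fin 2 → ℤ) × (Fin 2 → ℤ), F ((Ee x) (σ, kl)).1 * F ((Ee x) (σ, kl)).2)
      = ∑' kl : (Fin 2 → ℤ) × (Fin 2 → ℤ),
          (-1 : ℂ) ^ (∑ i, (σ i : ℤ) * (y i : ℤ)) *
          (Complex.exp (2 * (π : ℂ) * Complex.I *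
              Qf τ (fun i => (kl.1 i : ℂ) + ((σ i : ℤ) : ℂ) / 2)) *
            Complex.exp (2 * (π : ℂ) * Complex.I *
              Qf τ (fun i => (kl.2 i : ℂ) + ((σ i : ℤ) : ℂ) / 2 + ((x i : ℤ) : ℂ) / 2))) :=
        tsum_congr fun kl => hpt σ kl
    _ = (-1 : ℂ) ^ (∑ i, (σ i : ℤ) * (y i : ℤ)) *
          ∑' kl : (Fin 2 → ℤ) × (Fin 2 → ℤ),
            Complex.exp (2 * (π : ℂ) * Complex.I *
              Qf τ (fun i => (kl.1 i : ℂ) + ((σ i : ℤ) : ℂ) / 2)) *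
            Complex.exp (2 * (π : ℂ) * Complex.I *
              Qf τ (fun i => (kl.2 i : ℂ) + ((σ i : ℤ) : ℂ) / 2 + ((x i : ℤ) : ℂ) / 2)) :=
        tsum_mul_left
    _ = (-1 : ℂ) ^ (∑ i, (σ i : ℤ) * (y i : ℤ)) * (Th τ σ * Th τ (σ + x)) := by
        rw [← tsum_mul_tsum_of_summable_norm (hA σ) (hB σ), B_eq_Th τ σ x]
        rfl

set_option maxHeartbeats 2000000 in
lemma key_poly (a : (Fin 2 → Fin 2) → ℂ) :
    (∑ x : Fin 2 → Fin 2, ∑ y : Fin 2 → Fin 2,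
        (∑ σ : Fin 2 → Fin 2,
          (-1 : ℂ) ^ (∑ i, (σ i : ℤ) * (y i : ℤ)) * (a σ * a (σ + x))) ^ 4) ^ 2
      = 4 * ∑ x : Fin 2 → Fin 2, ∑ y : Fin 2 → Fin 2,
          (∑ σ : Fin 2 → Fin 2,
            (-1 : ℂ) ^ (∑ i, (σ i : ℤ) * (y i : ℤ)) * (a σ * a (σ + x))) ^ 8 := by
  have expand : ∀ f : (Fin 2 → Fin 2) → ℂ,
      ∑ s : Fin 2 → Fin 2, f s = f ![0,0] + f ![0,1] + f ![1,0] + f ![1,1] := by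
    intro f
    rw [show (Finset.univ : Finset (Fin 2 → Fin 2)) = {![0,0], ![0,1], ![1,0], ![1,1]} from by
      decide]
    rw [Finset.sum_insert (by decide), Finset.sum_insert (by decide),
      Finset.sum_insert (by decide), Finset.sum_singleton]
    ring
  simp only [expand, Fin.sum_univ_two, Matrix.cons_val_zero, Matrix.cons_val_one,
    Matrix.head_cons]
  norm_num [show ∀ i j k l : Fin 2, (![i, j] + ![k, l]) = ![i + k, j + l] from fun i j k l => by
      funext m; fin_cases m <;> simp,
    show ((1 : Fin 2) + 1) = 0 from rfl, show ((2 : Fin 2)) = 0 from by decide, show ((0 : Fin 2) + 1) = 1 from rfl,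
    show ((1 : Fin 2) + 0) = 1 from rfl, show ((0 : Fin 2) + 0) = 0 from rfl]
  ring

end ThetaAux

/-- Igusa quartic relation, Theorem 4.1 of the paper. For `τ` in the
Siegel upper half plane, `u₂(τ)² = 4·u₄(τ)` where `u_k = Σ_{x,y ∈ {0,1}²} θ_{x,y}^{4k}`. -/
theorem theta_igusa_quartic_relation
    (τ : Matrix (Fin 2) (Fin 2) ℂ)
    (hsymm : τ.IsSymm)
    (hpos : (τ.map Complex.im).PosDef) :
    (∑ x : Fin 2 → Fin 2, ∑ y : Fin 2 → Fin 2,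
        thetaConstant τ (fun i => (x i : ℤ)) (fun i => (y i : ℤ)) ^ 8) ^ 2
      = 4 * ∑ x : Fin 2 → Fin 2, ∑ y : Fin 2 → Fin 2,
          thetaConstant τ (fun i => (x i : ℤ)) (fun i => (y i : ℤ)) ^ 16 := by
  have KP := key_poly (Th τ)
  simp only [← theta_sq τ hsymm hpos] at KP
  simp only [← pow_mul] at KP
  norm_num at KP
  exact KP
end

section
/- For every symmetric 2×2 complex matrix τ whose imaginary part is positive definite, writing θ₁ = θ_{(0,0),(0,0)}(τ), θ₂ = θ_{(0,0),(1,1)}(τ), θ₃ = θ_{(0,0),(1,0)}(τ), θ₄ = θ_{(0,0),(0,1)}(τ), and g = θ_{(0,1),(0,0)}(τ), the identity g⁸ − (θ₁⁴ − θ₂⁴ + θ₃⁴ − θ₄⁴)·g⁴ + (θ₁²θ₃² − θ₂²θ₄²)² = 0 holds. -/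
open scoped Real
open Complex

/-- One term of the theta series. -/
noncomputable def thetaTerm (τ : Matrix (Fin 2) (Fin 2) ℂ) (x y : Fin 2 → ℤ)
    (n : Fin 2 → ℤ) : ℂ :=
  Complex.exp ((π : ℂ) * Complex.I *
      ((∑ i, ∑ j, ((n i : ℂ) + (x i : ℂ) / 2) * τ i j * ((n j : ℂ) + (x j : ℂ) / 2))
        + ∑ i, ((n i : ℂ) + (x i : ℂ) / 2) * (y i : ℂ)))

lemma thetaConstant_eq (τ : Matrix (Fin 2) (Fin 2) ℂ) (x y : Fin 2 → ℤ) :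
    thetaConstant τ x y = ∑' n, thetaTerm τ x y n := rfl

lemma norm_thetaTerm (τ : Matrix (Fin 2) (Fin 2) ℂ) (x y : Fin 2 → ℤ) (n : Fin 2 → ℤ) :
    ‖thetaTerm τ x y n‖ = Real.exp (-π * (∑ i, ∑ j,
      ((n i : ℝ) + (x i : ℝ) / 2) * (τ i j).im * ((n j : ℝ) + (x j : ℝ) / 2))) := by
  rw [thetaTerm, Complex.norm_exp]
  congr 1
  have hc : ∀ i, ((n i : ℂ) + (x i : ℂ) / 2) = (((n i : ℝ) + (x i : ℝ) / 2 : ℝ) : ℂ) := by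
    intro i; push_cast; ring
  have hy : ∀ i, ((y i : ℤ) : ℂ) = (((y i : ℝ) : ℝ) : ℂ) := by intro i; push_cast; ring
  simp only [Fin.sum_univ_two, hc, hy]
  simp only [Complex.mul_re, Complex.mul_im, Complex.add_re, Complex.add_im,
    Complex.ofReal_re, Complex.ofReal_im, Complex.I_re, Complex.I_im]
  ring

lemma posdef_quad_bound {Y : Matrix (Fin 2) (Fin 2) ℝ} (hY : Y.PosDef) :
    ∃ c > 0, ∀ v : Fin 2 → ℝ,
      c * ((v 0) ^ 2 + (v 1) ^ 2) ≤ ∑ i, ∑ j, v i * Y i j * v j := by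
  set Q : (Fin 2 → ℝ) → ℝ := fun v => ∑ i, ∑ j, v i * Y i j * v j with hQ
  have hQpos : ∀ v : Fin 2 → ℝ, v ≠ 0 → 0 < Q v := by
    intro v hv
    have h := hY.dotProduct_mulVec_pos hv
    have : dotProduct (star v) (Y.mulVec v) = Q v := by
      simp [dotProduct, Matrix.mulVec, Fin.sum_univ_two, Q, Finset.mul_sum, Matrix.vecHead, Matrix.vecTail]
      ring
    rwa [this] at h
  have hQcont : Continuous Q := by
    apply continuous_finset_sum; intro i _
    apply continuous_finset_sum; intro j _
    exact ((continuous_apply i).mul continuous_const).mul (continuous_apply j)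
  have hsph : IsCompact (Metric.sphere (0 : Fin 2 → ℝ) 1) := isCompact_sphere _ _
  have hne : (Metric.sphere (0 : Fin 2 → ℝ) 1).Nonempty := by
    refine ⟨fun _ => 1, ?_⟩
    rw [mem_sphere_zero_iff_norm]
    simpa using pi_norm_const (1 : ℝ)
  obtain ⟨u, hu, hmin⟩ := hsph.exists_isMinOn hne hQcont.continuousOn
  have hu1 : ‖u‖ = 1 := mem_sphere_zero_iff_norm.mp hu
  have hune : u ≠ 0 := by intro h; rw [h] at hu1; simp at hu1
  set c := Q u with hc
  have hcpos : 0 < c := hQpos u hune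
  refine ⟨c / 2, by positivity, ?_⟩
  intro v
  by_cases hv : v = 0
  · subst hv; simp [Q]
  · set s := ‖v‖ with hs
    have hspos : 0 < s := norm_pos_iff.mpr hv
    have hu' : (s⁻¹ • v) ∈ Metric.sphere (0 : Fin 2 → ℝ) 1 := by
      rw [mem_sphere_zero_iff_norm, norm_smul, norm_inv, norm_norm, ← hs,
        inv_mul_cancel₀ hspos.ne']
    have hle : c ≤ Q (s⁻¹ • v) := hmin hu'
    have hscale : Q (s⁻¹ • v) = s⁻¹ * s⁻¹ * Q v := by
      simp only [Q, Fin.sum_univ_two, Pi.smul_apply, smul_eq_mul]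
      ring
    have h0 : |v 0| ≤ s := by simpa [Real.norm_eq_abs] using norm_le_pi_norm v 0
    have h1 : |v 1| ≤ s := by simpa [Real.norm_eq_abs] using norm_le_pi_norm v 1
    have h0' : (v 0) ^ 2 ≤ s ^ 2 := by nlinarith [abs_nonneg (v 0), _root_.sq_abs (v 0)]
    have h1' : (v 1) ^ 2 ≤ s ^ 2 := by nlinarith [abs_nonneg (v 1), _root_.sq_abs (v 1)]
    have hQv : c * s ^ 2 ≤ Q v := by
      rw [hscale] at hle
      calc c * s ^ 2 = s * s * c := by ring
        _ ≤ s * s * (s⁻¹ * s⁻¹ * Q v) := by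
            exact mul_le_mul_of_nonneg_left hle (by positivity)
        _ = Q v := by field_simp
    nlinarith

lemma summable_gauss_1d {c : ℝ} (hc : 0 < c) (α : ℝ) :
    Summable fun n : ℤ => Real.exp (-π * (c * ((n : ℝ) + α) ^ 2)) := by
  have hb := summable_pow_mul_jacobiTheta₂_term_bound (c * |α|) hc 0
  simp only [pow_zero, one_mul] at hb
  refine hb.of_nonneg_of_le (fun n => (Real.exp_pos _).le) ?_
  intro n
  rw [Real.exp_le_exp]
  have hcast : ((|n| : ℤ) : ℝ) = |(n : ℝ)| := by push_cast; rfl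
  rw [hcast]
  have key : c * (n : ℝ) ^ 2 - 2 * (c * |α|) * |(n : ℝ)| ≤ c * ((n : ℝ) + α) ^ 2 := by
    nlinarith [neg_abs_le (α * (n : ℝ)), abs_mul α (n : ℝ), sq_nonneg α,
      mul_nonneg (abs_nonneg α) (abs_nonneg (n : ℝ))]
  have := mul_le_mul_of_nonneg_left key Real.pi_pos.le
  linarith

lemma summable_norm_thetaTerm {τ : Matrix (Fin 2) (Fin 2) ℂ}
    (hpos : (τ.map Complex.im).PosDef) (x y : Fin 2 → ℤ) :
    Summable fun n : Fin 2 → ℤ => ‖thetaTerm τ x y n‖ := by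
  obtain ⟨c, hc, hQ⟩ := posdef_quad_bound hpos
  have hdom : Summable fun n : Fin 2 → ℤ =>
      Real.exp (-π * (c * ((n 0 : ℝ) + (x 0 : ℝ) / 2) ^ 2)) *
      Real.exp (-π * (c * ((n 1 : ℝ) + (x 1 : ℝ) / 2) ^ 2)) := by
    have h2 : Summable fun p : ℤ × ℤ =>
        Real.exp (-π * (c * ((p.1 : ℝ) + (x 0 : ℝ) / 2) ^ 2)) *
        Real.exp (-π * (c * ((p.2 : ℝ) + (x 1 : ℝ) / 2) ^ 2)) :=
      Summable.mul_of_nonneg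
        (f := fun m : ℤ => Real.exp (-π * (c * ((m : ℝ) + (x 0 : ℝ) / 2) ^ 2)))
        (g := fun m : ℤ => Real.exp (-π * (c * ((m : ℝ) + (x 1 : ℝ) / 2) ^ 2)))
        (summable_gauss_1d hc _) (summable_gauss_1d hc _)
        (fun _ => (Real.exp_pos _).le) (fun _ => (Real.exp_pos _).le)
    exact ((piFinTwoEquiv fun _ => ℤ).summable_iff.mpr h2)
  refine hdom.of_nonneg_of_le (fun n => norm_nonneg _) ?_
  intro n
  rw [norm_thetaTerm, ← Real.exp_add]
  rw [Real.exp_le_exp]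
  have := hQ (fun i => (n i : ℝ) + (x i : ℝ) / 2)
  simp only [Matrix.map_apply] at this
  nlinarith [Real.pi_pos]

def epsz (e : Bool × Bool) : Fin 2 → ℤ := ![cond e.1 1 0, cond e.2 1 0]

def dupEquiv : ((Bool × Bool) × ((Fin 2 → ℤ) × (Fin 2 → ℤ))) ≃ ((Fin 2 → ℤ) × (Fin 2 → ℤ)) where
  toFun p := (fun i => p.2.1 i + p.2.2 i + epsz p.1 i, fun i => p.2.1 i - p.2.2 i)
  invFun q := ((decide ((q.1 0 + q.2 0) % 2 = 1), decide ((q.1 1 + q.2 1) % 2 = 1)),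
    (fun i => (q.1 i + q.2 i) / 2, fun i => (q.1 i - q.2 i) / 2))
  left_inv := by
    rintro ⟨⟨b1, b2⟩, k, l⟩
    refine Prod.ext (Prod.ext ?_ ?_) (Prod.ext (funext fun i => ?_) (funext fun i => ?_))
    · simp only [epsz, Matrix.cons_val_zero]
      cases b1 <;> simp <;> grind
    · simp only [epsz, Matrix.cons_val_one, Matrix.head_cons]
      cases b2 <;> simp <;> omega
    · fin_cases i <;> simp [epsz] <;> cases b1 <;> cases b2 <;> simp <;> omega
    · fin_cases i <;> simp [epsz] <;> cases b1 <;> cases b2 <;> simp <;> omega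
  right_inv := by
    rintro ⟨m, n⟩
    by_cases h0 : (m 0 + n 0) % 2 = 1 <;> by_cases h1 : (m 1 + n 1) % 2 = 1 <;>
      refine Prod.ext (funext fun i => ?_) (funext fun i => ?_) <;>
      fin_cases i <;> simp [epsz, h0, h1] <;> omega

lemma dupEquiv_apply (p : (Bool × Bool) × ((Fin 2 → ℤ) × (Fin 2 → ℤ))) :
    dupEquiv p = (fun i => p.2.1 i + p.2.2 i + epsz p.1 i, fun i => p.2.1 i - p.2.2 i) := rfl

lemma posdef_two_smul {τ : Matrix (Fin 2) (Fin 2) ℂ}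
    (hpos : (τ.map Complex.im).PosDef) :
    ((((2 : ℂ) • τ)).map Complex.im).PosDef := by
  have heq : (((2 : ℂ) • τ)).map Complex.im = (2 : ℝ) • (τ.map Complex.im) := by
    ext i j
    simp [Matrix.map_apply, Matrix.smul_apply, Complex.mul_im]
  rw [heq]
  refine Matrix.posDef_iff_dotProduct_mulVec.mpr ⟨?_, ?_⟩
  · have h := hpos.1
    unfold Matrix.IsHermitian at *
    rw [Matrix.conjTranspose_smul, h]
    simp
  · intro v hv
    have h := hpos.dotProduct_mulVec_pos hv
    have : dotProduct (star v) (((2:ℝ) • τ.map Complex.im).mulVec v)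
        = 2 * dotProduct (star v) ((τ.map Complex.im).mulVec v) := by
      rw [Matrix.smul_mulVec, dotProduct_smul]
      simp
    rw [this]
    positivity

/-- The duplication (product) formula for genus-2 theta constants with equal
first characteristic. -/
lemma theta_mul (τ : Matrix (Fin 2) (Fin 2) ℂ) (hpos : (τ.map Complex.im).PosDef)
    (a y y' : Fin 2 → ℤ) :
    thetaConstant τ a y * thetaConstant τ a y' =
      ∑ e : Bool × Bool,
        thetaConstant ((2 : ℂ) • τ) (fun i => epsz e i + a i) (fun i => y i + y' i) *
        thetaConstant ((2 : ℂ) • τ) (epsz e) (fun i => y i - y' i) := by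
  have h2pos := posdef_two_smul hpos
  have hf := summable_norm_thetaTerm hpos a y
  have hg := summable_norm_thetaTerm hpos a y'
  have hF : Summable fun z : (Fin 2 → ℤ) × (Fin 2 → ℤ) =>
      thetaTerm τ a y z.1 * thetaTerm τ a y' z.2 := summable_mul_of_summable_norm hf hg
  have hFE : Summable fun p : (Bool × Bool) × ((Fin 2 → ℤ) × (Fin 2 → ℤ)) =>
      thetaTerm τ a y (dupEquiv p).1 * thetaTerm τ a y' (dupEquiv p).2 :=
    dupEquiv.summable_iff.mpr hF
  rw [thetaConstant_eq, thetaConstant_eq, tsum_mul_tsum_of_summable_norm hf hg,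
    ← Equiv.tsum_eq dupEquiv (fun z => thetaTerm τ a y z.1 * thetaTerm τ a y' z.2),
    Summable.tsum_prod' hFE (fun b => hFE.prod_factor b), tsum_fintype]
  refine Finset.sum_congr rfl fun e _ => ?_
  have hu := summable_norm_thetaTerm h2pos (fun i => epsz e i + a i) (fun i => y i + y' i)
  have hv := summable_norm_thetaTerm h2pos (epsz e) (fun i => y i - y' i)
  have key : ∀ c : (Fin 2 → ℤ) × (Fin 2 → ℤ),
      thetaTerm τ a y (dupEquiv (e, c)).1 * thetaTerm τ a y' (dupEquiv (e, c)).2 =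
      thetaTerm ((2 : ℂ) • τ) (fun i => epsz e i + a i) (fun i => y i + y' i) c.1 *
      thetaTerm ((2 : ℂ) • τ) (epsz e) (fun i => y i - y' i) c.2 := by
    rintro ⟨k, l⟩
    rw [dupEquiv_apply]
    simp only [thetaTerm]
    rw [← Complex.exp_add, ← Complex.exp_add]
    congr 1
    simp only [Fin.sum_univ_two, Matrix.smul_apply, smul_eq_mul]
    push_cast
    ring
  calc (∑' (c : (Fin 2 → ℤ) × (Fin 2 → ℤ)),
        thetaTerm τ a y (dupEquiv (e, c)).1 * thetaTerm τ a y' (dupEquiv (e, c)).2)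
      = ∑' (c : (Fin 2 → ℤ) × (Fin 2 → ℤ)),
        thetaTerm ((2 : ℂ) • τ) (fun i => epsz e i + a i) (fun i => y i + y' i) c.1 *
        thetaTerm ((2 : ℂ) • τ) (epsz e) (fun i => y i - y' i) c.2 := tsum_congr key
    _ = _ := by
        rw [← tsum_mul_tsum_of_summable_norm hu hv, thetaConstant_eq, thetaConstant_eq]

lemma theta_even_y (σ : Matrix (Fin 2) (Fin 2) ℂ) (x1 x2 e1 e2 : ℤ) :
    thetaConstant σ ![x1, x2] ![2 * e1, 2 * e2] =
      Complex.exp ((π : ℂ) * Complex.I * (((x1 * e1 + x2 * e2 : ℤ) : ℂ))) *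
        thetaConstant σ ![x1, x2] ![0, 0] := by
  rw [thetaConstant_eq, thetaConstant_eq, ← tsum_mul_left]
  refine tsum_congr fun n => ?_
  simp only [thetaTerm]
  have h : ((π : ℂ) * Complex.I *
      ((∑ i, ∑ j, ((n i : ℂ) + ((![x1,x2] i : ℤ) : ℂ) / 2) * σ i j * ((n j : ℂ) + ((![x1,x2] j : ℤ) : ℂ) / 2))
        + ∑ i, ((n i : ℂ) + ((![x1,x2] i : ℤ) : ℂ) / 2) * ((![2*e1,2*e2] i : ℤ) : ℂ)))
      = ((π : ℂ) * Complex.I * (((x1 * e1 + x2 * e2 : ℤ) : ℂ)) +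
        (π : ℂ) * Complex.I *
      ((∑ i, ∑ j, ((n i : ℂ) + ((![x1,x2] i : ℤ) : ℂ) / 2) * σ i j * ((n j : ℂ) + ((![x1,x2] j : ℤ) : ℂ) / 2))
        + ∑ i, ((n i : ℂ) + ((![x1,x2] i : ℤ) : ℂ) / 2) * ((![(0:ℤ),0] i : ℤ) : ℂ)))
        + ((n 0 * e1 + n 1 * e2 : ℤ) : ℂ) * (2 * (π : ℂ) * Complex.I) := by
    simp only [Fin.sum_univ_two, Matrix.cons_val_zero, Matrix.cons_val_one, Matrix.head_cons]
    push_cast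
    ring
  rw [h, Complex.exp_add, Complex.exp_int_mul_two_pi_mul_I, mul_one, Complex.exp_add]

lemma theta_x2 (σ : Matrix (Fin 2) (Fin 2) ℂ) (x1 : ℤ) (y : Fin 2 → ℤ) :
    thetaConstant σ ![x1, 2] y = thetaConstant σ ![x1, 0] y := by
  rw [thetaConstant_eq, thetaConstant_eq,
    ← Equiv.tsum_eq (Equiv.addRight (![0,1] : Fin 2 → ℤ)) (thetaTerm σ ![x1, 0] y)]
  refine tsum_congr fun n => ?_
  simp only [thetaTerm, Equiv.coe_addRight, Pi.add_apply]
  congr 1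
  simp only [Fin.sum_univ_two, Matrix.cons_val_zero, Matrix.cons_val_one, Matrix.head_cons]
  push_cast
  ring

lemma vec_add_vec (a b c d : ℤ) : (fun i => ![a,b] i + ![c,d] i) = ![a+c, b+d] := by
  funext i; fin_cases i <;> simp

lemma vec_sub_vec (a b c d : ℤ) : (fun i => ![a,b] i - ![c,d] i) = ![a-c, b-d] := by
  funext i; fin_cases i <;> simp

/-- from the proof of Theorem 4.2 of the paper. With
`θ₁ = θ_{(0,0),(0,0)}`, `θ₂ = θ_{(0,0),(1,1)}`, `θ₃ = θ_{(0,0),(1,0)}`,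
`θ₄ = θ_{(0,0),(0,1)}` and `g = θ_{(0,1),(0,0)}`, one has
`g⁸ − (θ₁⁴ − θ₂⁴ + θ₃⁴ − θ₄⁴)g⁴ + (θ₁²θ₃² − θ₂²θ₄²)² = 0` on the Siegel upper half
plane. -/
theorem theta_g_fourth_power_satisfies_Pminus
    (τ : Matrix (Fin 2) (Fin 2) ℂ)
    (hsymm : τ.IsSymm)
    (hpos : (τ.map Complex.im).PosDef) :
    let θ₁ := thetaConstant τ ![0, 0] ![0, 0]
    let θ₂ := thetaConstant τ ![0, 0] ![1, 1]
    let θ₃ := thetaConstant τ ![0, 0] ![1, 0]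
    let θ₄ := thetaConstant τ ![0, 0] ![0, 1]
    let g := thetaConstant τ ![0, 1] ![0, 0]
    g ^ 8 - (θ₁ ^ 4 - θ₂ ^ 4 + θ₃ ^ 4 - θ₄ ^ 4) * g ^ 4
      + (θ₁ ^ 2 * θ₃ ^ 2 - θ₂ ^ 2 * θ₄ ^ 2) ^ 2 = 0 := by
  intro θ₁ θ₂ θ₃ θ₄ g
  have e1 := theta_mul τ hpos ![0,0] ![0,0] ![0,0]
  have e2 := theta_mul τ hpos ![0,0] ![1,1] ![1,1]
  have e3 := theta_mul τ hpos ![0,0] ![1,0] ![1,0]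
  have e4 := theta_mul τ hpos ![0,0] ![0,1] ![0,1]
  have e5 := theta_mul τ hpos ![0,1] ![0,0] ![0,0]
  simp only [Fintype.sum_prod_type, Fintype.sum_bool, epsz, cond_true, cond_false,
    vec_add_vec, vec_sub_vec] at e1 e2 e3 e4 e5
  norm_num at e1 e2 e3 e4 e5
  -- sign lemmas for shifting even y-characteristics back to 0
  have s22_00 : thetaConstant ((2:ℂ) • τ) ![0,0] ![2,2] = thetaConstant ((2:ℂ) • τ) ![0,0] ![0,0] := by
    have := theta_even_y ((2:ℂ) • τ) 0 0 1 1; norm_num at this; exact this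
  have s22_01 : thetaConstant ((2:ℂ) • τ) ![0,1] ![2,2] = - thetaConstant ((2:ℂ) • τ) ![0,1] ![0,0] := by
    have := theta_even_y ((2:ℂ) • τ) 0 1 1 1
    norm_num [Complex.exp_pi_mul_I] at this; linear_combination this
  have s22_10 : thetaConstant ((2:ℂ) • τ) ![1,0] ![2,2] = - thetaConstant ((2:ℂ) • τ) ![1,0] ![0,0] := by
    have := theta_even_y ((2:ℂ) • τ) 1 0 1 1
    norm_num [Complex.exp_pi_mul_I] at this; linear_combination this
  have s22_11 : thetaConstant ((2:ℂ) • τ) ![1,1] ![2,2] = thetaConstant ((2:ℂ) • τ) ![1,1] ![0,0] := by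
    have := theta_even_y ((2:ℂ) • τ) 1 1 1 1
    rw [show ((π:ℂ) * Complex.I * ((1*1+1*1 : ℤ) : ℂ)) = 2 * (π:ℂ) * Complex.I by push_cast; ring,
      Complex.exp_two_pi_mul_I] at this
    norm_num at this; exact this
  have s20_00 : thetaConstant ((2:ℂ) • τ) ![0,0] ![2,0] = thetaConstant ((2:ℂ) • τ) ![0,0] ![0,0] := by
    have := theta_even_y ((2:ℂ) • τ) 0 0 1 0; norm_num at this; exact this
  have s20_01 : thetaConstant ((2:ℂ) • τ) ![0,1] ![2,0] = thetaConstant ((2:ℂ) • τ) ![0,1] ![0,0] := by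
    have := theta_even_y ((2:ℂ) • τ) 0 1 1 0; norm_num at this; exact this
  have s20_10 : thetaConstant ((2:ℂ) • τ) ![1,0] ![2,0] = - thetaConstant ((2:ℂ) • τ) ![1,0] ![0,0] := by
    have := theta_even_y ((2:ℂ) • τ) 1 0 1 0
    norm_num [Complex.exp_pi_mul_I] at this; linear_combination this
  have s20_11 : thetaConstant ((2:ℂ) • τ) ![1,1] ![2,0] = - thetaConstant ((2:ℂ) • τ) ![1,1] ![0,0] := by
    have := theta_even_y ((2:ℂ) • τ) 1 1 1 0
    norm_num [Complex.exp_pi_mul_I] at this; linear_combination this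
  have s02_00 : thetaConstant ((2:ℂ) • τ) ![0,0] ![0,2] = thetaConstant ((2:ℂ) • τ) ![0,0] ![0,0] := by
    have := theta_even_y ((2:ℂ) • τ) 0 0 0 1; norm_num at this; exact this
  have s02_01 : thetaConstant ((2:ℂ) • τ) ![0,1] ![0,2] = - thetaConstant ((2:ℂ) • τ) ![0,1] ![0,0] := by
    have := theta_even_y ((2:ℂ) • τ) 0 1 0 1
    norm_num [Complex.exp_pi_mul_I] at this; linear_combination this
  have s02_10 : thetaConstant ((2:ℂ) • τ) ![1,0] ![0,2] = thetaConstant ((2:ℂ) • τ) ![1,0] ![0,0] := by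
    have := theta_even_y ((2:ℂ) • τ) 1 0 0 1; norm_num at this; exact this
  have s02_11 : thetaConstant ((2:ℂ) • τ) ![1,1] ![0,2] = - thetaConstant ((2:ℂ) • τ) ![1,1] ![0,0] := by
    have := theta_even_y ((2:ℂ) • τ) 1 1 0 1
    norm_num [Complex.exp_pi_mul_I] at this; linear_combination this
  have x2_0 : thetaConstant ((2:ℂ) • τ) ![0,2] ![0,0] = thetaConstant ((2:ℂ) • τ) ![0,0] ![0,0] :=
    theta_x2 ((2:ℂ) • τ) 0 ![0,0]
  have x2_1 : thetaConstant ((2:ℂ) • τ) ![1,2] ![0,0] = thetaConstant ((2:ℂ) • τ) ![1,0] ![0,0] :=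
    theta_x2 ((2:ℂ) • τ) 1 ![0,0]
  rw [s22_00, s22_01, s22_10, s22_11] at e2
  rw [s20_00, s20_01, s20_10, s20_11] at e3
  rw [s02_00, s02_01, s02_10, s02_11] at e4
  rw [x2_0, x2_1] at e5
  calc g ^ 8 - (θ₁ ^ 4 - θ₂ ^ 4 + θ₃ ^ 4 - θ₄ ^ 4) * g ^ 4
      + (θ₁ ^ 2 * θ₃ ^ 2 - θ₂ ^ 2 * θ₄ ^ 2) ^ 2
      = (g * g) ^ 4 - ((θ₁ * θ₁) ^ 2 - (θ₂ * θ₂) ^ 2 + (θ₃ * θ₃) ^ 2 - (θ₄ * θ₄) ^ 2) * (g * g) ^ 2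
        + ((θ₁ * θ₁) * (θ₃ * θ₃) - (θ₂ * θ₂) * (θ₄ * θ₄)) ^ 2 := by ring
    _ = 0 := by rw [e1, e2, e3, e4, e5]; ring
end
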